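/- In the Jacobi group Jac(V,Ω), the adjoint action is Ad_{(g,A,B)}(S',A',B') = (gS'g^{-1}, gA' - gS'g^{-1}A, B' + (A^T J g A')^{sym} - ½(A^T J g S' g^{-1} A)^{sym}), where J is the matrix of Ω; in particular, the formula (g,A,B)·(A',B') := (gA', B' + (A^T J g A')^{sym}) defines a left action of the Jacobi group on the Heisenberg Lie algebra by Lie algebra automorphisms. -/

import Mathlib

open Matrix

attribute [local instance] Matrix.normedAddCommGroup Matrix.normedSpace

/-- The symmetric part of a square matrix. -/
noncomputable def symPartM {m : Type*} [Fintype m] (M : Matrix m m ℝ) : Matrix m m ℝ :=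
  (1 / 2 : ℝ) • (M + Mᵀ)

/-- The cocycle `ℬ(A,A') = ½ (Aᵀ J A')^sym` of the generalized Heisenberg group. -/
noncomputable def BmatJ {k d : ℕ} (J : Matrix (Fin (2 * k)) (Fin (2 * k)) ℝ)
    (A A' : Matrix (Fin (2 * k)) (Fin d) ℝ) : Matrix (Fin d) (Fin d) ℝ :=
  (1 / 2 : ℝ) • symPartM (Aᵀ * J * A')

/-- Multiplication of the (generalized) Jacobi group
`(g,A,B)(h,A',B') = (gh, A + gA', B + B' + ℬ(A, gA'))`. -/
noncomputable def jacMulMat {k d : ℕ} (J : Matrix (Fin (2 * k)) (Fin (2 * k)) ℝ)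
    (x y : Matrix (Fin (2 * k)) (Fin (2 * k)) ℝ × Matrix (Fin (2 * k)) (Fin d) ℝ ×
      Matrix (Fin d) (Fin d) ℝ) :
    Matrix (Fin (2 * k)) (Fin (2 * k)) ℝ × Matrix (Fin (2 * k)) (Fin d) ℝ ×
      Matrix (Fin d) (Fin d) ℝ :=
  (x.1 * y.1, (x.2.1 + x.1 * y.2.1, x.2.2 + y.2.2 + BmatJ J x.2.1 (x.1 * y.2.1)))

/-- The action `(g,A,B)·(A',B') = (gA', B' + (Aᵀ J g A')^sym)` of the Jacobi group on the
Heisenberg Lie algebra. -/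
noncomputable def jacActHeis {k d : ℕ} (J : Matrix (Fin (2 * k)) (Fin (2 * k)) ℝ)
    (g : Matrix (Fin (2 * k)) (Fin (2 * k)) ℝ) (A : Matrix (Fin (2 * k)) (Fin d) ℝ)
    (z : Matrix (Fin (2 * k)) (Fin d) ℝ × Matrix (Fin d) (Fin d) ℝ) :
    Matrix (Fin (2 * k)) (Fin d) ℝ × Matrix (Fin d) (Fin d) ℝ :=
  (g * z.1, z.2 + symPartM (Aᵀ * J * g * z.1))

/-- The bracket `[(A,B),(A',B')] = (0, (Aᵀ J A')^sym)` of the Heisenberg Lie algebra. -/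
noncomputable def heisBr {k d : ℕ} (J : Matrix (Fin (2 * k)) (Fin (2 * k)) ℝ)
    (z z' : Matrix (Fin (2 * k)) (Fin d) ℝ × Matrix (Fin d) (Fin d) ℝ) :
    Matrix (Fin (2 * k)) (Fin d) ℝ × Matrix (Fin d) (Fin d) ℝ :=
  (0, symPartM (z.1ᵀ * J * z'.1))

section Helpers

open Matrix

variable {m n p q : Type*} [Fintype m] [Fintype n] [Fintype p] [Fintype q]

lemma hasDerivAt_matrix {f : ℝ → Matrix m n ℝ} {f' : Matrix m n ℝ} {t : ℝ} :
    HasDerivAt f f' t ↔ ∀ i j, HasDerivAt (fun s => f s i j) (f' i j) t := by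
  constructor
  · intro h i j
    exact hasDerivAt_pi.1 (hasDerivAt_pi.1 h i) j
  · intro h
    exact hasDerivAt_pi.2 fun i => hasDerivAt_pi.2 fun j => h i j

lemma HasDerivAt.matmul {f : ℝ → Matrix m n ℝ} {g : ℝ → Matrix n p ℝ}
    {f' : Matrix m n ℝ} {g' : Matrix n p ℝ} {t : ℝ}
    (hf : HasDerivAt f f' t) (hg : HasDerivAt g g' t) :
    HasDerivAt (fun s => f s * g s) (f' * g t + f t * g') t := by
  rw [hasDerivAt_matrix] at hf hg ⊢
  intro i j
  simp only [Matrix.mul_apply, Matrix.add_apply]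
  rw [← Finset.sum_add_distrib]
  exact HasDerivAt.fun_sum fun l _ => (hf i l).mul (hg l j)

lemma HasDerivAt.mtranspose {f : ℝ → Matrix m n ℝ} {f' : Matrix m n ℝ} {t : ℝ}
    (hf : HasDerivAt f f' t) :
    HasDerivAt (fun s => (f s)ᵀ) f'ᵀ t := by
  rw [hasDerivAt_matrix] at hf ⊢
  intro i j
  simpa using hf j i

lemma HasDerivAt.symPart {f : ℝ → Matrix m m ℝ} {f' : Matrix m m ℝ} {t : ℝ}
    (hf : HasDerivAt f f' t) :
    HasDerivAt (fun s => symPartM (f s)) (symPartM f') t :=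
  (hf.fun_add hf.mtranspose).fun_const_smul _

lemma symPartM_add (M N : Matrix m m ℝ) :
    symPartM (M + N) = symPartM M + symPartM N := by
  simp [symPartM, Matrix.transpose_add, smul_add]
  module

lemma symPartM_neg (M : Matrix m m ℝ) : symPartM (-M) = -symPartM M := by
  simp [symPartM]
  abel

lemma symPartM_zero : symPartM (0 : Matrix m m ℝ) = 0 := by
  simp [symPartM]

lemma symPartM_transpose (M : Matrix m m ℝ) : symPartM Mᵀ = symPartM M := by
  simp [symPartM, add_comm]

lemma BmatJ_add_right {k d : ℕ} (J : Matrix (Fin (2 * k)) (Fin (2 * k)) ℝ)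
    (X : Matrix (Fin (2 * k)) (Fin d) ℝ) (Y Z : Matrix (Fin (2 * k)) (Fin d) ℝ) :
    BmatJ J X (Y + Z) = BmatJ J X Y + BmatJ J X Z := by
  simp [BmatJ, Matrix.mul_add, symPartM_add, smul_add]

lemma BmatJ_add_left {k d : ℕ} (J : Matrix (Fin (2 * k)) (Fin (2 * k)) ℝ)
    (X Y : Matrix (Fin (2 * k)) (Fin d) ℝ) (Z : Matrix (Fin (2 * k)) (Fin d) ℝ) :
    BmatJ J (X + Y) Z = BmatJ J X Z + BmatJ J Y Z := by
  simp [BmatJ, Matrix.transpose_add, Matrix.add_mul, symPartM_add, smul_add]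

lemma BmatJ_neg_right {k d : ℕ} (J : Matrix (Fin (2 * k)) (Fin (2 * k)) ℝ)
    (X Y : Matrix (Fin (2 * k)) (Fin d) ℝ) :
    BmatJ J X (-Y) = -BmatJ J X Y := by
  simp [BmatJ, Matrix.mul_neg, symPartM_neg]

lemma sympl_cancel {k d e : ℕ} {J g : Matrix (Fin (2 * k)) (Fin (2 * k)) ℝ}
    (hg : gᵀ * J * g = J) (X : Matrix (Fin (2 * k)) (Fin d) ℝ)
    (Y : Matrix (Fin (2 * k)) (Fin e) ℝ) :
    (g * X)ᵀ * J * (g * Y) = Xᵀ * J * Y := by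
  rw [Matrix.transpose_mul]
  calc Xᵀ * gᵀ * J * (g * Y) = Xᵀ * (gᵀ * J * g) * Y := by
        simp only [Matrix.mul_assoc]
    _ = Xᵀ * J * Y := by rw [hg]

lemma BmatJ_g_g {k d : ℕ} {J g : Matrix (Fin (2 * k)) (Fin (2 * k)) ℝ}
    (hg : gᵀ * J * g = J) (X Y : Matrix (Fin (2 * k)) (Fin d) ℝ) :
    BmatJ J (g * X) (g * Y) = BmatJ J X Y := by
  unfold BmatJ
  rw [sympl_cancel hg]

end Helpers

/-- In the Jacobi group, the adjoint action is
`Ad_{(g,A,B)}(S',A',B') = (gS'g⁻¹, gA' - gS'g⁻¹A,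
B' + (AᵀJgA')^sym - ½(AᵀJgS'g⁻¹A)^sym)`: conjugation by `(g,A,B)` has the explicit form
below, and differentiating it along any curve through the identity with derivative
`(S',A',B')` yields the stated formula.  In particular,
`(g,A,B)·(A',B') := (gA', B' + (AᵀJgA')^sym)` defines a left action of the Jacobi group on
the Heisenberg Lie algebra by Lie algebra automorphisms. -/
theorem jacobi_adjoint_action (k d : ℕ)
    (J : Matrix (Fin (2 * k)) (Fin (2 * k)) ℝ) (hanti : Jᵀ = -J) (hJ : IsUnit J.det)
    (g : Matrix (Fin (2 * k)) (Fin (2 * k)) ℝ) (hg : gᵀ * J * g = J)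
    (hgdet : IsUnit g.det)
    (A : Matrix (Fin (2 * k)) (Fin d) ℝ) (B : Matrix (Fin d) (Fin d) ℝ) (hB : Bᵀ = B)
    (S' : Matrix (Fin (2 * k)) (Fin (2 * k)) ℝ) (A' : Matrix (Fin (2 * k)) (Fin d) ℝ)
    (B' : Matrix (Fin d) (Fin d) ℝ)
    (cg : ℝ → Matrix (Fin (2 * k)) (Fin (2 * k)) ℝ)
    (cA : ℝ → Matrix (Fin (2 * k)) (Fin d) ℝ) (cB : ℝ → Matrix (Fin d) (Fin d) ℝ)
    (hcg0 : cg 0 = 1) (hcA0 : cA 0 = 0) (hcB0 : cB 0 = 0)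
    (hcg : HasDerivAt cg S' 0) (hcA : HasDerivAt cA A' 0) (hcB : HasDerivAt cB B' 0) :
    (∀ (h : Matrix (Fin (2 * k)) (Fin (2 * k)) ℝ)
        (A₂ : Matrix (Fin (2 * k)) (Fin d) ℝ) (B₂ : Matrix (Fin d) (Fin d) ℝ),
      jacMulMat J (g, (A, B)) (jacMulMat J (h, (A₂, B₂)) (g⁻¹, (-(g⁻¹ * A), -B))) =
        (g * h * g⁻¹, (A + g * A₂ - g * h * g⁻¹ * A,
          B₂ + BmatJ J A (g * A₂) - BmatJ J (A + g * A₂) (g * h * g⁻¹ * A)))) ∧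
    HasDerivAt (fun t => g * cg t * g⁻¹) (g * S' * g⁻¹) 0 ∧
    HasDerivAt (fun t => A + g * cA t - g * cg t * g⁻¹ * A)
      (g * A' - g * S' * g⁻¹ * A) 0 ∧
    HasDerivAt
      (fun t => cB t + BmatJ J A (g * cA t) -
        BmatJ J (A + g * cA t) (g * cg t * g⁻¹ * A))
      (B' + symPartM (Aᵀ * J * g * A') -
        (1 / 2 : ℝ) • symPartM (Aᵀ * J * g * S' * g⁻¹ * A)) 0 ∧
    (∀ z : Matrix (Fin (2 * k)) (Fin d) ℝ × Matrix (Fin d) (Fin d) ℝ,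
      jacActHeis J (1 : Matrix (Fin (2 * k)) (Fin (2 * k)) ℝ) 0 z = z) ∧
    (∀ (g₁ g₂ : Matrix (Fin (2 * k)) (Fin (2 * k)) ℝ),
      g₁ᵀ * J * g₁ = J → g₂ᵀ * J * g₂ = J →
      ∀ (A₁ A₂ : Matrix (Fin (2 * k)) (Fin d) ℝ)
        (z : Matrix (Fin (2 * k)) (Fin d) ℝ × Matrix (Fin d) (Fin d) ℝ),
        jacActHeis J (g₁ * g₂) (A₁ + g₁ * A₂) z =
          jacActHeis J g₁ A₁ (jacActHeis J g₂ A₂ z)) ∧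
    (∀ z z' : Matrix (Fin (2 * k)) (Fin d) ℝ × Matrix (Fin d) (Fin d) ℝ,
      jacActHeis J g A (heisBr J z z') =
        heisBr J (jacActHeis J g A z) (jacActHeis J g A z')) := by
  have hgg : g * g⁻¹ = 1 := Matrix.mul_nonsing_inv g hgdet
  have hgg' : g⁻¹ * g = 1 := Matrix.nonsing_inv_mul g hgdet
  refine ⟨?_, ?_, ?_, ?_, ?_, ?_, ?_⟩
  · -- conjugation formula
    intro h A₂ B₂
    simp only [jacMulMat, Prod.mk.injEq]
    refine ⟨by simp only [Matrix.mul_assoc], ?_, ?_⟩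
    · simp only [Matrix.mul_add, Matrix.mul_neg, Matrix.mul_assoc, sub_eq_add_neg,
        add_assoc]
    · have e1 : g * (h * -(g⁻¹ * A)) = -(g * h * g⁻¹ * A) := by
        simp only [Matrix.mul_neg, Matrix.mul_assoc]
      have hx : g * (A₂ + h * -(g⁻¹ * A)) = g * A₂ + -(g * h * g⁻¹ * A) := by
        simp only [Matrix.mul_add, Matrix.mul_neg, Matrix.mul_assoc]
      have hy : BmatJ J A₂ (h * -(g⁻¹ * A)) = -BmatJ J (g * A₂) (g * h * g⁻¹ * A) := by
        rw [← BmatJ_g_g hg A₂ (h * -(g⁻¹ * A)), e1, BmatJ_neg_right]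
      rw [hx, hy, BmatJ_add_right, BmatJ_neg_right, BmatJ_add_left]
      abel
  · -- derivative of g cg g⁻¹
    have := ((hasDerivAt_const (0 : ℝ) g).matmul hcg).matmul (hasDerivAt_const (0 : ℝ) g⁻¹)
    simpa [hcg0] using this
  · -- derivative of A + g cA - g cg g⁻¹ A
    have h1 : HasDerivAt (fun t => g * cg t * g⁻¹) (g * S' * g⁻¹) 0 := by
      have := ((hasDerivAt_const (0 : ℝ) g).matmul hcg).matmul (hasDerivAt_const (0 : ℝ) g⁻¹)
      simpa [hcg0] using this
    have := ((hasDerivAt_const (0 : ℝ) A).fun_add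
        ((hasDerivAt_const (0 : ℝ) g).matmul hcA)).fun_sub
      (h1.matmul (hasDerivAt_const (0 : ℝ) A))
    simp [hcA0, hcg0, hgg] at this
    exact this
  · -- derivative of the B-component
    have h1 : HasDerivAt (fun t => g * cg t * g⁻¹) (g * S' * g⁻¹) 0 := by
      have := ((hasDerivAt_const (0 : ℝ) g).matmul hcg).matmul (hasDerivAt_const (0 : ℝ) g⁻¹)
      simpa [hcg0] using this
    have d1 : HasDerivAt (fun t => BmatJ J A (g * cA t))
        ((1 / 2 : ℝ) • symPartM (Aᵀ * J * (g * A'))) 0 := by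
      have hin : HasDerivAt (fun t => Aᵀ * J * (g * cA t)) (Aᵀ * J * (g * A')) 0 := by
        have := (hasDerivAt_const (0 : ℝ) (Aᵀ * J)).matmul
          ((hasDerivAt_const (0 : ℝ) g).matmul hcA)
        simpa [hcA0] using this
      exact hin.symPart.fun_const_smul _
    have d2 : HasDerivAt (fun t => BmatJ J (A + g * cA t) (g * cg t * g⁻¹ * A))
        ((1 / 2 : ℝ) • symPartM ((g * A')ᵀ * J * A + Aᵀ * J * (g * S' * g⁻¹ * A))) 0 := by
      have hf : HasDerivAt (fun t => (A + g * cA t)ᵀ * J) ((g * A')ᵀ * J) 0 := by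
        have := (((hasDerivAt_const (0 : ℝ) A).add
            ((hasDerivAt_const (0 : ℝ) g).matmul hcA)).mtranspose).matmul
          (hasDerivAt_const (0 : ℝ) J)
        simpa [hcA0] using this
      have hg2 : HasDerivAt (fun t => g * cg t * g⁻¹ * A) (g * S' * g⁻¹ * A) 0 := by
        have := h1.matmul (hasDerivAt_const (0 : ℝ) A)
        simpa [hcg0, hgg] using this
      have hin := hf.matmul hg2
      have hval : (fun t => (A + g * cA t)ᵀ * J * (g * cg t * g⁻¹ * A)) =
          fun t => ((A + g * cA t)ᵀ * J) * (g * cg t * g⁻¹ * A) := rfl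
      have := hin.symPart.fun_const_smul ((1 / 2 : ℝ))
      have e0 : (fun t => (A + g * cA t)ᵀ * J * (g * cg t * g⁻¹ * A)) 0 = Aᵀ * J * A := by
        simp [hcA0, hcg0, hgg]
      refine HasDerivAt.congr_deriv this ?_
      simp [hcA0, hcg0, hgg]
    have key := (hcB.fun_add d1).fun_sub d2
    refine HasDerivAt.congr_deriv key ?_
    have e1 : symPartM ((g * A')ᵀ * J * A) = -symPartM (Aᵀ * J * g * A') := by
      have : (g * A')ᵀ * J * A = -(Aᵀ * J * g * A')ᵀ := by
        simp only [Matrix.transpose_mul, hanti, Matrix.transpose_transpose,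
          Matrix.mul_neg, Matrix.neg_mul, Matrix.mul_assoc, neg_neg]
      rw [this, symPartM_neg, symPartM_transpose]
    have e2 : Aᵀ * J * (g * A') = Aᵀ * J * g * A' := by
      simp only [Matrix.mul_assoc]
    have e3 : Aᵀ * J * (g * S' * g⁻¹ * A) = Aᵀ * J * g * S' * g⁻¹ * A := by
      simp only [Matrix.mul_assoc]
    rw [symPartM_add, e1, e2, e3]
    module
  · -- identity acts trivially
    intro z
    simp [jacActHeis, symPartM]
  · -- left action
    intro g₁ g₂ hg₁ hg₂ A₁ A₂ z
    simp only [jacActHeis, Prod.mk.injEq]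
    constructor
    · simp only [Matrix.mul_assoc]
    · have e : (A₁ + g₁ * A₂)ᵀ * J * (g₁ * g₂) * z.1 =
          A₁ᵀ * J * g₁ * (g₂ * z.1) + (g₁ * A₂)ᵀ * J * (g₁ * (g₂ * z.1)) := by
        simp only [Matrix.transpose_add, Matrix.add_mul, Matrix.mul_assoc]
      rw [e, symPartM_add, sympl_cancel hg₁]
      have e2 : A₂ᵀ * J * (g₂ * z.1) = A₂ᵀ * J * g₂ * z.1 := by
        simp only [Matrix.mul_assoc]
      rw [e2]
      abel
  · -- Lie algebra automorphism
    intro z z'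
    simp only [jacActHeis, heisBr, Prod.mk.injEq]
    refine ⟨by simp, ?_⟩
    rw [sympl_cancel hg]
    simp [symPartM_zero, Matrix.mul_assoc]
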